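/- Let 1 ≤ q ≤ s ≤ n-2 and let α_1,…,α_{s-q},a_{s-q+1},…,a_s and β_1,…,β_{s-q},b_{s-q+1},…,b_s be two sequences of indices in {1,…,n}, each consisting of pairwise distinct entries, such that: (i) x_{α_ℓ β_ℓ} ∈ U for 1 ≤ ℓ ≤ s-q; (ii) α_i < b_j and x_{α_i b_j} ∉ D ∪ U for all 1 ≤ i ≤ s-q and s-q+1 ≤ j ≤ s; (iii) x_{α_i β_j} ∉ D ∪ U for all 1 ≤ i < j ≤ s-q; (iv) the leading monomial in_≺([a_{s-q+1},…,a_s | b_{s-q+1},…,b_s]) is a product of variables from U. Then in_≺([α_1,…,α_{s-q},a_{s-q+1},…,a_s | β_1,…,β_{s-q},b_{s-q+1},…,b_s]) = x_{α_1 β_1} ⋯ x_{α_{s-q} β_{s-q}} · in_≺([a_{s-q+1},…,a_s | b_{s-q+1},…,b_s]). -/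

import Mathlib

open MvPolynomial

/-- The set `D` of diagonal variables `x_{ii}` (0-indexed). -/
def Dset (n : ℕ) : Set (Sym2 (Fin n)) := {v | ∃ i : Fin n, v = s(i, i)}

/-- The set `U` of variables `x_{13}, x_{24}, …, x_{n-2,n}, x_{12}, x_{n-1,n}` (0-indexed). -/
def Uset (n : ℕ) : Set (Sym2 (Fin n)) :=
  {v | ∃ i j : Fin n, v = s(i, j) ∧
    ((j : ℕ) = (i : ℕ) + 2 ∨ ((i : ℕ) = 0 ∧ (j : ℕ) = 1) ∨
      ((i : ℕ) = n - 2 ∧ (j : ℕ) = n - 1))}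

/-- `rank` encodes the linear order on the variables described in the paper:
`x_{11} ≻ … ≻ x_{nn} ≻ x_{13} ≻ … ≻ x_{n-2,n} ≻ x_{12} ≻ x_{n-1,n} ≻ (rest)`,
where a smaller rank means a larger variable. -/
def IsGoodRank (n : ℕ) (rank : Sym2 (Fin n) → ℕ) : Prop :=
  Function.Injective rank ∧
  (∀ i : Fin n, rank s(i, i) = (i : ℕ)) ∧
  (∀ i j : Fin n, (j : ℕ) = (i : ℕ) + 2 → rank s(i, j) = n + (i : ℕ)) ∧
  (∀ i j : Fin n, (i : ℕ) = 0 → (j : ℕ) = 1 → rank s(i, j) = 2 * n - 2) ∧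
  (∀ i j : Fin n, (i : ℕ) = n - 2 → (j : ℕ) = n - 1 → rank s(i, j) = 2 * n - 1) ∧
  (∀ v : Sym2 (Fin n), v ∉ Dset n ∪ Uset n → 2 * n ≤ rank v)

/-- The degree reverse lexicographic order on exponent vectors induced by `rank`:
`a ≺ b` iff `deg a < deg b`, or the degrees agree and at the `rank`-largest (i.e. smallest)
variable where `a` and `b` differ, `a` has the larger exponent. -/
def DegRevLexLT {n : ℕ} (rank : Sym2 (Fin n) → ℕ) (a b : Sym2 (Fin n) →₀ ℕ) : Prop :=
  (a.sum fun _ e => e) < (b.sum fun _ e => e) ∨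
    ((a.sum fun _ e => e) = (b.sum fun _ e => e) ∧
      ∃ v : Sym2 (Fin n), b v < a v ∧ ∀ w : Sym2 (Fin n), rank v < rank w → a w = b w)

/-- `μ` is the leading monomial (exponent vector) of `f` w.r.t. the degrevlex order `≺`. -/
def IsLeadingMonomial {K : Type*} [Field K] {n : ℕ} (rank : Sym2 (Fin n) → ℕ)
    (f : MvPolynomial (Sym2 (Fin n)) K) (μ : Sym2 (Fin n) →₀ ℕ) : Prop :=
  μ ∈ f.support ∧ ∀ ν ∈ f.support, ν ≠ μ → DegRevLexLT rank ν μ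

/-- The minor `[a_1,…,a_s | b_1,…,b_s]` of the generic symmetric matrix `X = (x_{ij})`. -/
noncomputable def symMinor (K : Type*) [Field K] {n s : ℕ} (a b : Fin s → Fin n) :
    MvPolynomial (Sym2 (Fin n)) K :=
  Matrix.det (Matrix.of fun k l => (MvPolynomial.X s(a k, b l) : MvPolynomial (Sym2 (Fin n)) K))

open MvPolynomial Finset Equiv Equiv.Perm

section Aux
variable {K : Type*} [Field K] {n : ℕ}

/-- total degree of an exponent vector as an additive hom -/
noncomputable def degHom (n : ℕ) : (Sym2 (Fin n) →₀ ℕ) →+ ℕ :=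
  Finsupp.liftAddHom (fun _ => AddMonoidHom.id ℕ)

lemma degHom_apply (m : Sym2 (Fin n) →₀ ℕ) : degHom n m = m.sum fun _ e => e := rfl

lemma degHom_sum_single {ι : Type*} (t : Finset ι) (v : ι → Sym2 (Fin n)) :
    degHom n (∑ l ∈ t, Finsupp.single (v l) 1) = t.card := by
  rw [map_sum]
  simp [degHom, Finsupp.sum_single_index]

lemma prod_X_eq {ι : Type*} (t : Finset ι) (v : ι → Sym2 (Fin n)) :
    (∏ l ∈ t, (X (v l) : MvPolynomial (Sym2 (Fin n)) K)) =
      monomial (∑ l ∈ t, Finsupp.single (v l) 1) (1 : K) := by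
  classical
  induction t using Finset.induction_on with
  | empty => simp
  | @insert _ _ h ih =>
      rw [Finset.prod_insert h, ih, Finset.sum_insert h, X, monomial_mul, mul_one]

lemma coeff_minor_eq {s : ℕ} (a b : Fin s → Fin n) (ν : Sym2 (Fin n) →₀ ℕ) :
    coeff ν (symMinor K a b) =
      ∑ σ : Perm (Fin s), ((Equiv.Perm.sign σ : ℤ) : K) *
        (if (∑ l : Fin s, Finsupp.single s(a (σ l), b l) 1) = ν then 1 else 0) := by
  rw [symMinor, Matrix.det_apply', coeff_sum]
  refine Finset.sum_congr rfl fun σ _ => ?_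
  have : (∏ l : Fin s, (Matrix.of fun k l => (X s(a k, b l) : MvPolynomial (Sym2 (Fin n)) K)) (σ l) l)
      = monomial (∑ l : Fin s, Finsupp.single s(a (σ l), b l) 1) (1 : K) := by
    rw [← prod_X_eq]; rfl
  rw [this]
  rw [← map_intCast (C : K →+* MvPolynomial (Sym2 (Fin n)) K), coeff_C_mul, coeff_monomial]

lemma degRevLexLT_add_left {rank : Sym2 (Fin n) → ℕ} {a b : Sym2 (Fin n) →₀ ℕ}
    (c : Sym2 (Fin n) →₀ ℕ) (h : DegRevLexLT rank a b) :
    DegRevLexLT rank (c + a) (c + b) := by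
  have hadd : ∀ x y : Sym2 (Fin n) →₀ ℕ,
      ((x + y).sum fun _ e => e) = (x.sum fun _ e => e) + (y.sum fun _ e => e) := by
    intro x y
    exact Finsupp.sum_add_index' (fun _ => rfl) (fun _ _ _ => rfl)
  rcases h with h | ⟨hdeg, v, hv, hagree⟩
  · left; rw [hadd, hadd]; omega
  · right
    refine ⟨by rw [hadd, hadd, hdeg], v, ?_, fun w hw => ?_⟩
    · simp only [Finsupp.add_apply]; omega
    · simp only [Finsupp.add_apply, hagree w hw]

lemma finsupp_add_left_cancel (c x y : Sym2 (Fin n) →₀ ℕ) : c + x = c + y ↔ x = y := by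
  constructor
  · intro h
    ext v
    have := congrArg (fun m => m v) h
    simp only [Finsupp.add_apply] at this
    omega
  · rintro rfl; rfl

lemma exists_perm_of_coeff_ne {s : ℕ} (a b : Fin s → Fin n) (ν : Sym2 (Fin n) →₀ ℕ)
    (h : coeff ν (symMinor K a b) ≠ 0) :
    ∃ σ : Perm (Fin s), (∑ l : Fin s, Finsupp.single s(a (σ l), b l) 1) = ν := by
  by_contra hc
  push_neg at hc
  rw [coeff_minor_eq] at h
  exact h (Finset.sum_eq_zero fun σ _ => by rw [if_neg (hc σ), mul_zero])

lemma factor_mem_of_sum_single {ι : Type*} [Fintype ι] (v : ι → Sym2 (Fin n)) (l : ι) :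
    (∑ k : ι, Finsupp.single (v k) 1) (v l) ≠ 0 := by
  classical
  rw [Finsupp.finset_sum_apply]
  have h1 : (Finsupp.single (v l) (1:ℕ)) (v l) = 1 := by simp
  have : 1 ≤ ∑ k : ι, (Finsupp.single (v k) (1:ℕ)) (v l) := by
    calc 1 = (Finsupp.single (v l) (1:ℕ)) (v l) := h1.symm
    _ ≤ _ := Finset.single_le_sum (f := fun k => (Finsupp.single (v k) (1:ℕ)) (v l))
        (fun _ _ => Nat.zero_le _) (Finset.mem_univ l)
  omega
section Block
variable {n : ℕ}

lemma block_fix {s q : ℕ} (A B : Fin s → Fin n)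
    (h2 : ∀ i j : Fin s, (i : ℕ) < s - q → s - q ≤ (j : ℕ) →
      A i < B j ∧ s(A i, B j) ∉ Dset n ∪ Uset n)
    (h3 : ∀ i j : Fin s, i < j → (j : ℕ) < s - q → s(A i, B j) ∉ Dset n ∪ Uset n)
    (σ : Equiv.Perm (Fin s))
    (hσ : ∀ l : Fin s, s(A (σ l), B l) ∈ Dset n ∪ Uset n) :
    ∀ l : Fin s, (l : ℕ) < s - q → σ l = l := by
  have hA2 : ∀ l : Fin s, s - q ≤ (l : ℕ) → s - q ≤ (σ l : ℕ) := by
    intro l hl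
    by_contra hcon
    push_neg at hcon
    exact (h2 (σ l) l hcon hl).2 (hσ l)
  have hB1 : ∀ l : Fin s, (l : ℕ) < s - q → (σ l : ℕ) < s - q := by
    intro l hl
    by_contra hcon
    push_neg at hcon
    set T : Finset (Fin s) := Finset.univ.filter (fun m => s - q ≤ (m : ℕ)) with hT
    have himg : T.image σ = T := by
      apply Finset.eq_of_subset_of_card_le
      · intro x hx
        simp only [Finset.mem_image] at hx
        obtain ⟨m, hm, rfl⟩ := hx
        simp only [hT, Finset.mem_filter, Finset.mem_univ, true_and] at hm ⊢
        exact hA2 m hm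
      · rw [Finset.card_image_of_injective _ σ.injective]
    have hmem : σ l ∈ T := by
      simp only [hT, Finset.mem_filter, Finset.mem_univ, true_and]
      exact hcon
    rw [← himg] at hmem
    simp only [Finset.mem_image] at hmem
    obtain ⟨m, hm, hme⟩ := hmem
    cases σ.injective hme
    simp only [hT, Finset.mem_filter, Finset.mem_univ, true_and] at hm
    omega
  by_contra hcon
  push_neg at hcon
  set M : Finset (Fin s) := Finset.univ.filter (fun l => (l : ℕ) < s - q ∧ σ l ≠ l) with hM
  have hne : M.Nonempty := by
    obtain ⟨l, hl1, hl2⟩ := hcon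
    exact ⟨l, by simp [hM, hl1, hl2]⟩
  obtain ⟨l, hlM, hmax⟩ := Finset.exists_max_image M (fun l => (l : ℕ)) hne
  simp only [hM, Finset.mem_filter, Finset.mem_univ, true_and] at hlM
  obtain ⟨hl1, hl2⟩ := hlM
  have hlt : σ l < l := by
    rcases lt_or_gt_of_ne hl2 with h | h
    · exact h
    · exfalso
      have h4 : (σ l : ℕ) < s - q := hB1 l hl1
      have h5 : σ (σ l) = σ l := by
        by_contra h6
        have hm : σ l ∈ M := by simp [hM, h4, h6]
        have h7 : (σ l : ℕ) ≤ (l : ℕ) := hmax _ hm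
        have h8 := Fin.lt_def.mp h
        omega
      exact hl2 (σ.injective h5)
  exact h3 (σ l) l hlt hl1 (hσ l)

/-- the order-preserving identification of `Fin q` with the last block of `Fin s` -/
def blockEquiv (q s : ℕ) (hq : 1 ≤ q) (hqs : q ≤ s) :
    Fin q ≃ {l : Fin s // s - q ≤ (l : ℕ)} where
  toFun k := ⟨⟨s - q + (k : ℕ), by have := k.isLt; omega⟩, by simp⟩
  invFun l := ⟨(l : Fin s) - (s - q), by have := (l.1).isLt; have := l.2; omega⟩
  left_inv k := by
    ext
    simp
  right_inv l := by
    ext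
    have := l.2
    simp only []
    omega

end Block
section Decomp
variable {n q s : ℕ}

/-- extension of a permutation of the last block to all of `Fin s` -/
def Phi (hq : 1 ≤ q) (hqs : q ≤ s) (τ : Equiv.Perm (Fin q)) : Equiv.Perm (Fin s) :=
  τ.extendDomain (blockEquiv q s hq hqs)

lemma Phi_injective (hq : 1 ≤ q) (hqs : q ≤ s) :
    Function.Injective (Phi (s := s) hq hqs) := fun τ τ' h =>
  Equiv.Perm.extendDomainHom_injective (blockEquiv q s hq hqs) h

lemma sign_Phi (hq : 1 ≤ q) (hqs : q ≤ s) (τ : Equiv.Perm (Fin q)) :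
    Equiv.Perm.sign (Phi hq hqs τ) = Equiv.Perm.sign τ :=
  Equiv.Perm.sign_extendDomain τ (blockEquiv q s hq hqs)

def emb (hq : 1 ≤ q) (hqs : q ≤ s) (k : Fin q) : Fin s :=
  (blockEquiv q s hq hqs k : Fin s)

lemma Phi_fix (hq : 1 ≤ q) (hqs : q ≤ s) (τ : Equiv.Perm (Fin q)) (l : Fin s)
    (hl : (l : ℕ) < s - q) : Phi hq hqs τ l = l :=
  Equiv.Perm.extendDomain_apply_not_subtype τ (blockEquiv q s hq hqs) (by omega)

lemma Phi_emb (hq : 1 ≤ q) (hqs : q ≤ s) (τ : Equiv.Perm (Fin q)) (k : Fin q) :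
    Phi hq hqs τ (emb hq hqs k) = emb hq hqs (τ k) :=
  Equiv.Perm.extendDomain_apply_image τ (blockEquiv q s hq hqs) k

lemma pmon_Phi {n : ℕ} (hq : 1 ≤ q) (hqs : q ≤ s) (A B : Fin s → Fin n)
    (τ : Equiv.Perm (Fin q)) :
    (∑ l : Fin s, Finsupp.single s(A (Phi hq hqs τ l), B l) 1) =
      (∑ ℓ ∈ Finset.univ.filter (fun ℓ : Fin s => (ℓ : ℕ) < s - q),
        Finsupp.single s(A ℓ, B ℓ) 1) +
      ∑ k : Fin q, Finsupp.single s(A (emb hq hqs (τ k)), B (emb hq hqs k)) 1 := by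
  classical
  rw [← Finset.sum_filter_add_sum_filter_not Finset.univ (fun l : Fin s => s - q ≤ (l : ℕ))
    (fun l => Finsupp.single s(A (Phi hq hqs τ l), B l) 1), add_comm]
  congr 1
  · rw [show Finset.univ.filter (fun l : Fin s => ¬ s - q ≤ (l : ℕ)) =
        Finset.univ.filter (fun l : Fin s => (l : ℕ) < s - q) from by
      ext l; simp only [Finset.mem_filter, Finset.mem_univ, true_and]; omega]
    refine Finset.sum_congr rfl fun l hl => ?_
    simp only [Finset.mem_filter, Finset.mem_univ, true_and] at hl
    rw [Phi_fix hq hqs τ l hl]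
  · rw [Finset.sum_subtype (p := fun l : Fin s => s - q ≤ (l : ℕ)) _ (by simp)
      (fun l => Finsupp.single s(A (Phi hq hqs τ l), B l) 1)]
    rw [← Equiv.sum_comp (blockEquiv q s hq hqs)
      (fun l => Finsupp.single s(A (Phi hq hqs τ (l : Fin s)), B (l : Fin s)) 1)]
    refine Finset.sum_congr rfl fun k _ => ?_
    rw [show ((blockEquiv q s hq hqs k : {l : Fin s // s - q ≤ (l : ℕ)}) : Fin s)
        = emb hq hqs k from rfl, Phi_emb]

lemma eq_Phi_of_fix (hq : 1 ≤ q) (hqs : q ≤ s) (σ : Equiv.Perm (Fin s))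
    (hfix : ∀ l : Fin s, (l : ℕ) < s - q → σ l = l) :
    ∃ τ : Equiv.Perm (Fin q), σ = Phi hq hqs τ := by
  have hiff : ∀ x : Fin s, s - q ≤ (x : ℕ) ↔ s - q ≤ ((σ x) : ℕ) := by
    intro x
    constructor
    · intro hx
      by_contra hcon
      push_neg at hcon
      have h1 := hfix (σ x) hcon
      have h2 := σ.injective h1
      rw [h2] at hcon
      omega
    · intro hx
      by_contra hcon
      push_neg at hcon
      rw [hfix x hcon] at hx
      omega
  refine ⟨(Equiv.permCongr (blockEquiv q s hq hqs)).symm (σ.subtypePerm (fun x => (hiff x).symm)), Equiv.ext fun l => ?_⟩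
  show σ l = ((Equiv.permCongr (blockEquiv q s hq hqs)).symm
      (σ.subtypePerm (fun x => (hiff x).symm))).extendDomain (blockEquiv q s hq hqs) l
  by_cases hp : s - q ≤ (l : ℕ)
  · rw [Equiv.Perm.extendDomain_apply_subtype (p := fun l : Fin s => s - q ≤ (l : ℕ)) _ _ (b := l) hp]
    simp [Equiv.permCongr_symm, Equiv.permCongr_apply, Equiv.Perm.subtypePerm_apply]
  · rw [Equiv.Perm.extendDomain_apply_not_subtype (p := fun l : Fin s => s - q ≤ (l : ℕ)) _ _ (b := l) hp, hfix l (by omega)]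

end Decomp

end Aux

/-- **Lemma 3.3.** (Indices are 0-based: the first `s-q` positions carry the sequences
`α_1,…,α_{s-q}` and `β_1,…,β_{s-q}`, the last `q` positions carry `a_{s-q+1},…,a_s`
and `b_{s-q+1},…,b_s`.) Under the stated hypotheses,
`in_≺ [α_1,…,α_{s-q},a_{s-q+1},…,a_s | β_1,…,β_{s-q},b_{s-q+1},…,b_s]
  = x_{α_1 β_1} ⋯ x_{α_{s-q} β_{s-q}} · in_≺ [a_{s-q+1},…,a_s | b_{s-q+1},…,b_s]`. -/
theorem stmt2 {K : Type*} [Field K] (n q s : ℕ) (hq : 1 ≤ q) (hqs : q ≤ s) (hs : s ≤ n - 2)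
    (rank : Sym2 (Fin n) → ℕ) (hrank : IsGoodRank n rank)
    (A B : Fin s → Fin n) (hA : Function.Injective A) (hB : Function.Injective B)
    (h1 : ∀ ℓ : Fin s, (ℓ : ℕ) < s - q → s(A ℓ, B ℓ) ∈ Uset n)
    (h2 : ∀ i j : Fin s, (i : ℕ) < s - q → s - q ≤ (j : ℕ) →
      A i < B j ∧ s(A i, B j) ∉ Dset n ∪ Uset n)
    (h3 : ∀ i j : Fin s, i < j → (j : ℕ) < s - q → s(A i, B j) ∉ Dset n ∪ Uset n)
    (μ : Sym2 (Fin n) →₀ ℕ)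
    (hμ : IsLeadingMonomial rank
      (symMinor K (fun k : Fin q => A ⟨s - q + (k : ℕ), by have := k.isLt; omega⟩)
        (fun k : Fin q => B ⟨s - q + (k : ℕ), by have := k.isLt; omega⟩)) μ)
    (hμU : ↑μ.support ⊆ Uset n) :
    IsLeadingMonomial rank (symMinor K A B)
      ((∑ ℓ ∈ Finset.univ.filter (fun ℓ : Fin s => (ℓ : ℕ) < s - q),
        Finsupp.single s(A ℓ, B ℓ) 1) + μ) := by
  classical
  obtain ⟨hinj, hD, hU1, hU2, hU3, hbig⟩ := hrank
  have hn3 : 3 ≤ n := by omega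
  -- abbreviations
  set c : Sym2 (Fin n) →₀ ℕ := ∑ ℓ ∈ Finset.univ.filter (fun ℓ : Fin s => (ℓ : ℕ) < s - q),
      Finsupp.single s(A ℓ, B ℓ) 1 with hcdef
  set A2 : Fin q → Fin n := fun k : Fin q => A (emb hq hqs k) with hA2def
  set B2 : Fin q → Fin n := fun k : Fin q => B (emb hq hqs k) with hB2def
  have hμ' : IsLeadingMonomial rank (symMinor K A2 B2) μ := hμ
  set g : MvPolynomial (Sym2 (Fin n)) K := symMinor K A2 B2 with hgdef
  set f : MvPolynomial (Sym2 (Fin n)) K := symMinor K A B with hfdef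
  set pmon2 : Equiv.Perm (Fin q) → (Sym2 (Fin n) →₀ ℕ) :=
    fun τ => ∑ k : Fin q, Finsupp.single s(A2 (τ k), B2 k) 1 with hpmon2def
  -- rank facts
  have hlt2n : ∀ v ∈ Dset n ∪ Uset n, rank v < 2 * n := by
    rintro v (⟨i, rfl⟩ | ⟨i, j, rfl, hcase⟩)
    · rw [hD i]; have := i.isLt; omega
    · rcases hcase with h | ⟨h1', h2'⟩ | ⟨h1', h2'⟩
      · rw [hU1 i j h]; have := i.isLt; omega
      · rw [hU2 i j h1' h2']; omega
      · rw [hU3 i j h1' h2']; omega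
  -- support facts
  have hsuppc : ∀ v, c v ≠ 0 → v ∈ Uset n := by
    intro v hv
    rw [hcdef, Finsupp.finset_sum_apply] at hv
    obtain ⟨ℓ, hℓmem, hℓ⟩ := Finset.exists_ne_zero_of_sum_ne_zero hv
    simp only [Finset.mem_filter, Finset.mem_univ, true_and] at hℓmem
    have : v = s(A ℓ, B ℓ) := by
      by_contra hne
      rw [Finsupp.single_apply, if_neg (fun h => hne h.symm)] at hℓ
      exact hℓ rfl
    rw [this]
    exact h1 ℓ hℓmem
  have hsuppstar : ∀ v, (c + μ) v ≠ 0 → v ∈ Dset n ∪ Uset n := by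
    intro v hv
    rw [Finsupp.add_apply] at hv
    by_cases h : c v = 0
    · right
      exact hμU (Finsupp.mem_support_iff.mpr (by omega))
    · right; exact hsuppc v h
  -- CORE: coefficient reduction for monomials supported in D ∪ U
  have key : ∀ ν : Sym2 (Fin n) →₀ ℕ, (∀ v, ν v ≠ 0 → v ∈ Dset n ∪ Uset n) →
      coeff ν f = ∑ τ : Equiv.Perm (Fin q),
        ((Equiv.Perm.sign τ : ℤ) : K) * (if c + pmon2 τ = ν then 1 else 0) := by
    intro ν hν
    rw [hfdef, coeff_minor_eq]
    refine (Finset.sum_of_injOn (Phi hq hqs) ((Phi_injective hq hqs).injOn)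
      (by simp) ?_ ?_).symm
    · intro σ _ hσ
      have hnot : (∑ l : Fin s, Finsupp.single s(A (σ l), B l) 1) ≠ ν := by
        intro hcon
        have hfactors : ∀ l : Fin s, s(A (σ l), B l) ∈ Dset n ∪ Uset n := by
          intro l
          refine hν _ ?_
          rw [← hcon]
          exact factor_mem_of_sum_single (fun l => s(A (σ l), B l)) l
        obtain ⟨τ, hτ⟩ := eq_Phi_of_fix hq hqs σ (block_fix A B h2 h3 σ hfactors)
        exact hσ ⟨τ, by simp, hτ.symm⟩
      rw [if_neg hnot, mul_zero]
    · intro τ _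
      rw [sign_Phi, pmon_Phi hq hqs A B τ]
  have hcoeq : ∀ ντ : Sym2 (Fin n) →₀ ℕ, (∀ v, (c + ντ) v ≠ 0 → v ∈ Dset n ∪ Uset n) →
      coeff (c + ντ) f = coeff ντ g := by
    intro ντ h
    rw [key _ h, hgdef, coeff_minor_eq]
    refine Finset.sum_congr rfl fun τ _ => ?_
    congr 1
    exact if_congr (finsupp_add_left_cancel c (pmon2 τ) ντ) rfl rfl
  have hgco : ∀ ντ : Sym2 (Fin n) →₀ ℕ, coeff ντ g ≠ 0 →
      ∃ τ : Equiv.Perm (Fin q), pmon2 τ = ντ := fun ντ h =>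
    exists_perm_of_coeff_ne A2 B2 ντ h
  -- the target monomial is c + μ
  constructor
  · rw [MvPolynomial.mem_support_iff]
    show coeff (c + μ) f ≠ 0
    rw [hcoeq μ hsuppstar]
    exact MvPolynomial.mem_support_iff.mp hμ'.1
  · intro ν hν hne
    have hνcoeff : coeff ν f ≠ 0 := MvPolynomial.mem_support_iff.mp hν
    obtain ⟨σ, hσ⟩ := exists_perm_of_coeff_ne A B ν hνcoeff
    have hdegν : (ν.sum fun _ e => e) = s := by
      rw [← hσ, ← degHom_apply, degHom_sum_single]
      simp
    have hdegstar : ((c + μ).sum fun _ e => e) = s := by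
      obtain ⟨τμ, hτμ⟩ := hgco μ (MvPolynomial.mem_support_iff.mp hμ'.1)
      have hformula : (∑ l : Fin s, Finsupp.single s(A (Phi hq hqs τμ l), B l) 1) = c + μ := by
        rw [pmon_Phi hq hqs A B τμ]
        congr 1
      rw [← hformula, ← degHom_apply, degHom_sum_single]
      simp
    by_cases hcase : ∀ v, ν v ≠ 0 → v ∈ Dset n ∪ Uset n
    · -- ν supported in D ∪ U : reduce to the small minor
      have hkey := key ν hcase
      rw [hkey] at hνcoeff
      obtain ⟨τ, -, hττ⟩ := Finset.exists_ne_zero_of_sum_ne_zero hνcoeff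
      have hcpm : c + pmon2 τ = ν := by
        by_contra hcon
        rw [if_neg hcon, mul_zero] at hττ
        exact hττ rfl
      have hgcoeff : coeff (pmon2 τ) g ≠ 0 := by
        have := hcoeq (pmon2 τ) (by rw [hcpm]; exact hcase)
        rw [hcpm] at this
        rw [← this]
        exact MvPolynomial.mem_support_iff.mp hν
      have hneμ : pmon2 τ ≠ μ := by
        intro hcon
        rw [hcon] at hcpm
        exact hne hcpm.symm
      have hlt := hμ'.2 (pmon2 τ) (MvPolynomial.mem_support_iff.mpr hgcoeff) hneμ
      have := degRevLexLT_add_left c hlt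
      rwa [hcpm] at this
    · -- ν has a variable outside D ∪ U
      push_neg at hcase
      obtain ⟨v₀, hv0ne, hv0notin⟩ := hcase
      right
      refine ⟨by rw [hdegν, hdegstar], ?_⟩
      set Dif : Finset (Sym2 (Fin n)) :=
        (ν.support ∪ (c + μ).support).filter (fun w => ν w ≠ (c + μ) w) with hDifdef
      have hmemDif : ∀ w, ν w ≠ (c + μ) w → w ∈ Dif := by
        intro w hw
        rw [hDifdef, Finset.mem_filter, Finset.mem_union]
        refine ⟨?_, hw⟩
        by_cases h : ν w = 0
        · right; rw [Finsupp.mem_support_iff]; omega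
        · left; exact Finsupp.mem_support_iff.mpr h
      have hstarv0 : (c + μ) v₀ = 0 := by
        by_contra h
        exact hv0notin (hsuppstar v₀ h)
      have hv0Dif : v₀ ∈ Dif := hmemDif v₀ (by omega)
      obtain ⟨v, hvD, hmax⟩ := Finset.exists_max_image Dif rank ⟨v₀, hv0Dif⟩
      have hvne : ν v ≠ (c + μ) v := by
        rw [hDifdef, Finset.mem_filter] at hvD
        exact hvD.2
      have hrv : 2 * n ≤ rank v := le_trans (hbig v₀ hv0notin) (hmax v₀ hv0Dif)
      have hstarv : (c + μ) v = 0 := by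
        by_contra h
        have := hlt2n v (hsuppstar v h)
        omega
      refine ⟨v, ?_, ?_⟩
      · rw [hstarv]
        omega
      · intro w hw
        by_contra hne2
        have := hmax w (hmemDif w hne2)
        omega
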